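/- Suppose U ∈ ℝ^{N×K} has orthonormal columns, all rows of U are nonzero, U = Y U(I,:) for some nonnegative N×K matrix Y with exactly K linearly independent rows indexed by I, and U_* is the row-normalized version of U. If U(I,:) is invertible, then U_*(I,:) is invertible and U_* = Y_* U_*(I,:) where Y_* = D₁ Y D₂ for some diagonal matrices D₁ (N×N, positive diagonal) and D₂ (K×K, positive diagonal). -/

import Mathlib

open Matrix

/-- row normalization preserves the cone structure:
if `U = Y U(I,:)` with `Y ≥ 0`, `Y(I,:)` a positive diagonal matrix, and
`U(I,:)` invertible, then `U_*(I,:)` is invertible and `U_* = Y_* U_*(I,:)`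
with `Y_* = D₁ Y D₂` for positive diagonal matrices `D₁, D₂`. -/
theorem normalized_cone_structure {N K : ℕ}
    (U : Matrix (Fin N) (Fin K) ℝ)
    (hUo : Uᵀ * U = 1) (hrows : ∀ i, U i ≠ 0)
    (I : Fin K → Fin N) (hI : Function.Injective I)
    (Y : Matrix (Fin N) (Fin K) ℝ) (hYnn : ∀ i k, 0 ≤ Y i k)
    (g : Fin K → ℝ) (hg : ∀ k, 0 < g k)
    (hYI : Y.submatrix I id = Matrix.diagonal g)
    (hUY : U = Y * U.submatrix I id)
    (hUinv : IsUnit (U.submatrix I id)) :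
    let Ustar : Matrix (Fin N) (Fin K) ℝ :=
      Matrix.of fun i j => U i j / Real.sqrt (∑ j', (U i j') ^ 2)
    IsUnit (Ustar.submatrix I id) ∧
    ∃ D₁ : Fin N → ℝ, ∃ D₂ : Fin K → ℝ,
      (∀ i, 0 < D₁ i) ∧ (∀ k, 0 < D₂ k) ∧
      Ustar = (Matrix.diagonal D₁ * Y * Matrix.diagonal D₂) *
        Ustar.submatrix I id := by
  intro Ustar
  set n : Fin N → ℝ := fun i => Real.sqrt (∑ j', (U i j') ^ 2) with hn
  have hnpos : ∀ i, 0 < n i := by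
    intro i
    apply Real.sqrt_pos.2
    obtain ⟨j, hj⟩ := Function.ne_iff.1 (hrows i)
    apply Finset.sum_pos' (fun j' _ => sq_nonneg _)
    exact ⟨j, Finset.mem_univ j, by simpa using sq_pos_of_ne_zero hj⟩
  have hUstar : Ustar = Matrix.diagonal (fun i => (n i)⁻¹) * U := by
    ext i j
    simp [Ustar, Matrix.diagonal_mul, div_eq_inv_mul, hn]
  have hsub : Ustar.submatrix I id =
      Matrix.diagonal (fun k => (n (I k))⁻¹) * U.submatrix I id := by
    ext k j
    simp [hUstar, Matrix.diagonal_mul, Matrix.submatrix_apply]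
  constructor
  · rw [hsub]
    refine ((Matrix.isUnit_diagonal.2 (IsUnit.of_mul_eq_one (fun k => n (I k)) ?_))).mul hUinv
    funext k
    exact inv_mul_cancel₀ (hnpos (I k)).ne'
  · refine ⟨fun i => (n i)⁻¹, fun k => n (I k), fun i => inv_pos.2 (hnpos i),
      fun k => hnpos (I k), ?_⟩
    rw [hsub, Matrix.mul_assoc (Matrix.diagonal _ * Y),
      ← Matrix.mul_assoc (Matrix.diagonal fun k => n (I k)),
      Matrix.diagonal_mul_diagonal]
    have : (fun k => n (I k) * (n (I k))⁻¹) = fun _ => (1 : ℝ) := by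
      funext k; exact mul_inv_cancel₀ (hnpos (I k)).ne'
    rw [this, Matrix.diagonal_one, Matrix.one_mul, hUstar, Matrix.mul_assoc,
      ← hUY]
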